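/- Every geometric lattice of rank 3 has a real-rooted chain polynomial. Specifically, if L is a geometric lattice of rank 3 with m₁ atoms, m₂ coatoms, and e covering relations between atoms and coatoms, then c_L(t) = (1 + (m₁+m₂)t + e·t²)(1+t)², and since e ≤ m₁m₂ the discriminant (m₁−m₂)² + 4(m₁m₂ − e) is nonnegative, so c_L(t) is real-rooted. -/

import Mathlib

open scoped Classical

/-- The chain polynomial of a finite poset: `c_P(t) = Σ_k c_k(P) t^k`, where `c_k(P)`
is the number of `k`-element chains of `P`. -/
noncomputable def chainPoly (P : Type*) [Fintype P] [PartialOrder P] : Polynomial ℝ :=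
  ∑ s ∈ Finset.univ.filter (fun s : Finset P => IsChain (· ≤ ·) (↑s : Set P)),
    Polynomial.X ^ s.card

section AuxRank
variable {L : Type*} [Lattice L] [Fintype L] [BoundedOrder L] {ρ : L → ℕ}

lemma rk_mono (hcov : ∀ a b : L, a ⋖ b → ρ b = ρ a + 1) :
    ∀ a b : L, a < b → ρ a < ρ b := by
  intro a
  induction a using WellFoundedGT.induction with
  | _ a IH =>
    intro b hab
    obtain ⟨c, hc, hcb⟩ := exists_covBy_le_of_lt hab
    rcases eq_or_lt_of_le hcb with rfl | h
    · have := hcov a c hc; omega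
    · have := IH c hc.lt b h
      have := hcov a c hc; omega

variable (hρ0 : ρ ⊥ = 0) (hcov : ∀ a b : L, a ⋖ b → ρ b = ρ a + 1) (hrank : ρ ⊤ = 3)
include hρ0 hcov hrank

omit hρ0 in
lemma rk_le3 (x : L) : ρ x ≤ 3 := by
  rcases eq_or_lt_of_le (le_top : x ≤ ⊤) with rfl | h
  · omega
  · have := rk_mono hcov x ⊤ h; omega

omit hrank in
lemma rk_bot_iff (x : L) : ρ x = 0 ↔ x = ⊥ := by
  constructor
  · intro h
    by_contra hne
    have := rk_mono hcov ⊥ x (bot_lt_iff_ne_bot.2 hne); omega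
  · rintro rfl; exact hρ0

omit hρ0 in
lemma rk_top_iff (x : L) : ρ x = 3 ↔ x = ⊤ := by
  constructor
  · intro h
    by_contra hne
    have := rk_mono hcov x ⊤ (lt_top_iff_ne_top.2 hne); omega
  · rintro rfl; exact hrank

omit hcov in
lemma rk_bot_ne_top : (⊥ : L) ≠ ⊤ := by
  intro h; rw [h, hrank] at hρ0; omega

end AuxRank

lemma sum_powerset_pow {α : Type*} (s : Finset α) :
    ∑ t ∈ s.powerset, (Polynomial.X : Polynomial ℝ) ^ t.card
      = (1 + Polynomial.X) ^ s.card := by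
  classical
  induction s using Finset.induction with
  | empty => simp
  | @insert a s ha ih =>
    rw [Finset.sum_powerset_insert ha, ih]
    have h2 : ∑ t ∈ s.powerset, (Polynomial.X : Polynomial ℝ) ^ (insert a t).card
        = Polynomial.X * (1 + Polynomial.X) ^ s.card := by
      rw [← ih, Finset.mul_sum]
      refine Finset.sum_congr rfl fun t ht => ?_
      rw [Finset.card_insert_of_notMem fun hat => ha (Finset.mem_powerset.1 ht hat)]
      ring
    rw [h2, Finset.card_insert_of_notMem ha]
    ring

section Main
variable {L : Type*} [Lattice L] [Fintype L] [BoundedOrder L]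
  (ρ : L → ℕ) (hρ0 : ρ ⊥ = 0) (hcov : ∀ a b : L, a ⋖ b → ρ b = ρ a + 1)
  (hrank : ρ ⊤ = 3)

include hρ0 hcov hrank in
lemma chain_set_eq :
    Finset.univ.filter (fun s : Finset L => IsChain (· ≤ ·) (↑s : Set L)) =
    ((({⊥, ⊤} : Finset L).powerset) ×ˢ
      (({∅} : Finset (Finset L))
        ∪ (Finset.univ.filter (fun x : L => ρ x = 1)).image (fun a => {a})
        ∪ (Finset.univ.filter (fun x : L => ρ x = 2)).image (fun b => {b})
        ∪ (Finset.univ.filter (fun p : L × L => ρ p.1 = 1 ∧ ρ p.2 = 2 ∧ p.1 < p.2)).image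
            (fun p => {p.1, p.2}))).image (fun p => p.1 ∪ p.2) := by
  have hmono := rk_mono (ρ := ρ) hcov
  have hle3 := rk_le3 (ρ := ρ) hcov hrank
  have hbot := rk_bot_iff (ρ := ρ) hρ0 hcov
  have htop := rk_top_iff (ρ := ρ) hcov hrank
  have hMmem : ∀ m ∈ (({∅} : Finset (Finset L))
        ∪ (Finset.univ.filter (fun x : L => ρ x = 1)).image (fun a => {a})
        ∪ (Finset.univ.filter (fun x : L => ρ x = 2)).image (fun b => {b})
        ∪ (Finset.univ.filter (fun p : L × L => ρ p.1 = 1 ∧ ρ p.2 = 2 ∧ p.1 < p.2)).image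
            (fun p => {p.1, p.2})),
      (∀ x ∈ m, ρ x = 1 ∨ ρ x = 2) ∧ IsChain (· ≤ ·) (↑m : Set L) := by
    intro m hm
    simp only [Finset.mem_union, Finset.mem_singleton, Finset.mem_image,
      Finset.mem_filter, Finset.mem_univ, true_and] at hm
    rcases hm with ((rfl | ⟨a, ha, rfl⟩) | ⟨b, hb, rfl⟩) | ⟨p, hp, rfl⟩
    · simp [IsChain]
    · constructor
      · intro x hx; rw [Finset.mem_singleton] at hx; subst hx; exact Or.inl ha
      · simp [Set.subsingleton_singleton.isChain]
    · constructor
      · intro x hx; rw [Finset.mem_singleton] at hx; subst hx; exact Or.inr hb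
      · simp [Set.subsingleton_singleton.isChain]
    · obtain ⟨h1, h2, hlt⟩ := hp
      constructor
      · intro x hx
        rw [Finset.mem_insert, Finset.mem_singleton] at hx
        rcases hx with rfl | rfl
        · exact Or.inl h1
        · exact Or.inr h2
      · intro x hx y hy hxy
        simp only [Finset.coe_insert, Finset.coe_singleton, Set.mem_insert_iff,
          Set.mem_singleton_iff] at hx hy
        rcases hx with rfl | rfl <;> rcases hy with rfl | rfl
        · exact absurd rfl hxy
        · exact Or.inl hlt.le
        · exact Or.inr hlt.le
        · exact absurd rfl hxy
  apply Finset.ext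
  intro s
  simp only [Finset.mem_filter, Finset.mem_univ, true_and, Finset.mem_image,
    Finset.mem_product, Finset.mem_powerset]
  constructor
  · intro hs
    refine ⟨(s.filter (fun x => x = ⊥ ∨ x = ⊤),
             s.filter (fun x => ¬(x = ⊥ ∨ x = ⊤))), ⟨?_, ?_⟩, ?_⟩
    · intro x hx
      simp only [Finset.mem_filter] at hx
      simp only [Finset.mem_insert, Finset.mem_singleton]
      exact hx.2
    · set m := s.filter (fun x => ¬(x = ⊥ ∨ x = ⊤)) with hmdef
      have hmsub : m ⊆ s := Finset.filter_subset _ _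
      have hmρ : ∀ x ∈ m, ρ x = 1 ∨ ρ x = 2 := by
        intro x hx
        simp only [hmdef, Finset.mem_filter, not_or] at hx
        obtain ⟨hxs, hx1, hx2⟩ := hx
        have := hle3 x
        have h0 : ρ x ≠ 0 := fun h => hx1 ((hbot x).1 h)
        have h3 : ρ x ≠ 3 := fun h => hx2 ((htop x).1 h)
        omega
      have hm1 : ∀ x ∈ m, ∀ y ∈ m, ρ x = ρ y → x = y := by
        intro x hx y hy hxy
        by_contra hne
        rcases hs (hmsub hx) (hmsub hy) hne with h | h
        · have := hmono x y (lt_of_le_of_ne h hne); omega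
        · have := hmono y x (lt_of_le_of_ne h (Ne.symm hne)); omega
      have hmsplit : m = m.filter (fun x => ρ x = 1) ∪ m.filter (fun x => ρ x = 2) := by
        ext x
        simp only [Finset.mem_union, Finset.mem_filter]
        constructor
        · intro hx; rcases hmρ x hx with h | h
          · exact Or.inl ⟨hx, h⟩
          · exact Or.inr ⟨hx, h⟩
        · rintro (⟨hx, _⟩ | ⟨hx, _⟩) <;> exact hx
      have hsingle : ∀ k : ℕ, ∀ a ∈ m.filter (fun x => ρ x = k),
          m.filter (fun x => ρ x = k) = {a} := by
        intro k a ha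
        rw [Finset.eq_singleton_iff_unique_mem]
        refine ⟨ha, fun x hx => ?_⟩
        rw [Finset.mem_filter] at ha hx
        exact hm1 x hx.1 a ha.1 (hx.2.trans ha.2.symm)
      simp only [Finset.mem_union, Finset.mem_singleton, Finset.mem_image,
        Finset.mem_filter, Finset.mem_univ, true_and]
      rcases (m.filter (fun x => ρ x = 1)).eq_empty_or_nonempty with h1 | ⟨a, ha⟩ <;>
        rcases (m.filter (fun x => ρ x = 2)).eq_empty_or_nonempty with h2 | ⟨b, hb⟩
      · left; left; left; rw [hmsplit, h1, h2]; simp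
      · have hbm := hb
        rw [Finset.mem_filter] at hbm
        left; right
        exact ⟨b, hbm.2, by rw [hmsplit, h1, hsingle 2 b hb]; simp⟩
      · have ham := ha
        rw [Finset.mem_filter] at ham
        left; left; right
        exact ⟨a, ham.2, by rw [hmsplit, h2, hsingle 1 a ha]; simp⟩
      · have ham := ha; have hbm := hb
        rw [Finset.mem_filter] at ham hbm
        right
        have hne : a ≠ b := fun h => by rw [h] at ham; omega
        have hab : a < b := by
          rcases hs (hmsub ham.1) (hmsub hbm.1) hne with h | h
          · exact lt_of_le_of_ne h hne
          · exact absurd (hmono b a (lt_of_le_of_ne h hne.symm)) (by omega)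
        refine ⟨(a, b), ⟨ham.2, hbm.2, hab⟩, ?_⟩
        rw [hmsplit, hsingle 1 a ha, hsingle 2 b hb]
        rw [Finset.insert_eq]
    · simp only []
      rw [Finset.filter_union_filter_not_eq]
  · rintro ⟨⟨b, m⟩, ⟨hb, hm⟩, rfl⟩
    obtain ⟨hmρ, hmchain⟩ := hMmem m hm
    intro x hx y hy hxy
    simp only [Finset.coe_union, Set.mem_union, Finset.mem_coe] at hx hy
    have hbelem : ∀ z ∈ b, z = ⊥ ∨ z = ⊤ := by
      intro z hz
      have := hb hz
      simpa [Finset.mem_insert, Finset.mem_singleton] using this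
    rcases hx with hx | hx
    · rcases hbelem x hx with rfl | rfl
      · exact Or.inl bot_le
      · exact Or.inr le_top
    · rcases hy with hy | hy
      · rcases hbelem y hy with rfl | rfl
        · exact Or.inr bot_le
        · exact Or.inl le_top
      · exact hmchain hx hy hxy

include hρ0 hcov hrank in
lemma chainPoly_eq (m₁ m₂ e : ℕ)
    (hm₁ : m₁ = (Finset.univ.filter (fun x : L => ρ x = 1)).card)
    (hm₂ : m₂ = (Finset.univ.filter (fun x : L => ρ x = 2)).card)
    (he : e = (Finset.univ.filter
      (fun p : L × L => ρ p.1 = 1 ∧ ρ p.2 = 2 ∧ p.1 < p.2)).card) :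
    chainPoly L =
      (1 + Polynomial.C ((m₁ : ℝ) + m₂) * Polynomial.X +
        Polynomial.C (e : ℝ) * Polynomial.X ^ 2) * (1 + Polynomial.X) ^ 2 := by
  have hbot := rk_bot_iff (ρ := ρ) hρ0 hcov
  have htop := rk_top_iff (ρ := ρ) hcov hrank
  set M := (({∅} : Finset (Finset L))
        ∪ (Finset.univ.filter (fun x : L => ρ x = 1)).image (fun a => {a})
        ∪ (Finset.univ.filter (fun x : L => ρ x = 2)).image (fun b => {b})
        ∪ (Finset.univ.filter (fun p : L × L => ρ p.1 = 1 ∧ ρ p.2 = 2 ∧ p.1 < p.2)).image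
            (fun p => {p.1, p.2})) with hM
  set B := ({⊥, ⊤} : Finset L).powerset with hB
  -- elements of members of M are not ⊥ or ⊤
  have hMne : ∀ m ∈ M, ∀ x ∈ m, x ≠ ⊥ ∧ x ≠ ⊤ := by
    intro m hm x hx
    have hr : ρ x = 1 ∨ ρ x = 2 := by
      simp only [hM, Finset.mem_union, Finset.mem_singleton, Finset.mem_image,
        Finset.mem_filter, Finset.mem_univ, true_and] at hm
      rcases hm with ((rfl | ⟨a, ha, rfl⟩) | ⟨b, hb, rfl⟩) | ⟨p, hp, rfl⟩
      · exact absurd hx (Finset.notMem_empty _)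
      · rw [Finset.mem_singleton] at hx; subst hx; exact Or.inl ha
      · rw [Finset.mem_singleton] at hx; subst hx; exact Or.inr hb
      · rw [Finset.mem_insert, Finset.mem_singleton] at hx
        rcases hx with rfl | rfl
        · exact Or.inl hp.1
        · exact Or.inr hp.2.1
    constructor
    · intro hxbot; rw [← hbot x] at hxbot; omega
    · intro hxtop; rw [← htop x] at hxtop; omega
  have hBmem : ∀ b ∈ B, ∀ z ∈ b, z = ⊥ ∨ z = ⊤ := by
    intro b hb z hz
    rw [hB, Finset.mem_powerset] at hb
    have := hb hz
    simpa using this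
  have hdisj : ∀ p ∈ B ×ˢ M, Disjoint p.1 p.2 := by
    rintro ⟨b, m⟩ hp
    rw [Finset.mem_product] at hp
    rw [Finset.disjoint_left]
    intro x hxb hxm
    rcases hBmem b hp.1 x hxb with rfl | rfl
    · exact (hMne m hp.2 _ hxm).1 rfl
    · exact (hMne m hp.2 _ hxm).2 rfl
  have hinj : ∀ p ∈ B ×ˢ M, ∀ q ∈ B ×ˢ M, p.1 ∪ p.2 = q.1 ∪ q.2 → p = q := by
    rintro ⟨b, m⟩ hp ⟨b', m'⟩ hq h
    rw [Finset.mem_product] at hp hq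
    have key : ∀ (c : Finset L) (n : Finset L), c ∈ B → n ∈ M →
        c = (c ∪ n).filter (fun x => x = ⊥ ∨ x = ⊤) ∧
        n = (c ∪ n).filter (fun x => ¬(x = ⊥ ∨ x = ⊤)) := by
      intro c n hc hn
      constructor
      · ext x
        simp only [Finset.mem_filter, Finset.mem_union]
        constructor
        · intro hx; exact ⟨Or.inl hx, hBmem c hc x hx⟩
        · rintro ⟨hx | hx, hbt⟩
          · exact hx
          · obtain ⟨h1, h2⟩ := hMne n hn x hx
            rcases hbt with rfl | rfl
            · exact absurd rfl h1
            · exact absurd rfl h2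
      · ext x
        simp only [Finset.mem_filter, Finset.mem_union, not_or]
        constructor
        · intro hx
          obtain ⟨h1, h2⟩ := hMne n hn x hx
          exact ⟨Or.inr hx, h1, h2⟩
        · rintro ⟨hx | hx, h1, h2⟩
          · rcases hBmem c hc x hx with rfl | rfl
            · exact absurd rfl h1
            · exact absurd rfl h2
          · exact hx
    obtain ⟨hb1, hm1⟩ := key b m hp.1 hp.2
    obtain ⟨hb2, hm2⟩ := key b' m' hq.1 hq.2
    rw [h] at hb1 hm1
    exact Prod.ext (hb1.trans hb2.symm) (hm1.trans hm2.symm)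
  rw [chainPoly, chain_set_eq ρ hρ0 hcov hrank, ← hM, ← hB,
    Finset.sum_image hinj]
  have hsplit : ∀ p ∈ B ×ˢ M, (Polynomial.X : Polynomial ℝ) ^ (p.1 ∪ p.2).card
      = Polynomial.X ^ p.1.card * Polynomial.X ^ p.2.card := by
    intro p hp
    rw [Finset.card_union_of_disjoint (hdisj p hp), pow_add]
  rw [Finset.sum_congr rfl hsplit, Finset.sum_product]
  have : ∑ b ∈ B, ∑ m ∈ M, (Polynomial.X : Polynomial ℝ) ^ b.card * Polynomial.X ^ m.card
      = (∑ b ∈ B, (Polynomial.X : Polynomial ℝ) ^ b.card)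
        * (∑ m ∈ M, (Polynomial.X : Polynomial ℝ) ^ m.card) := by
    rw [Finset.sum_mul]
    refine Finset.sum_congr rfl fun b _ => ?_
    rw [Finset.mul_sum]
  rw [this]
  have hBsum : ∑ b ∈ B, (Polynomial.X : Polynomial ℝ) ^ b.card
      = (1 + Polynomial.X) ^ 2 := by
    rw [hB, sum_powerset_pow]
    congr 1
    rw [Finset.card_insert_of_notMem (by simp [rk_bot_ne_top (ρ := ρ) hρ0 hrank]),
      Finset.card_singleton]
  have hMsum : ∑ m ∈ M, (Polynomial.X : Polynomial ℝ) ^ m.card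
      = 1 + Polynomial.C ((m₁ : ℝ) + m₂) * Polynomial.X
        + Polynomial.C (e : ℝ) * Polynomial.X ^ 2 := by
    set A := Finset.univ.filter (fun x : L => ρ x = 1) with hA
    set Co := Finset.univ.filter (fun x : L => ρ x = 2) with hCo
    set E := Finset.univ.filter (fun p : L × L => ρ p.1 = 1 ∧ ρ p.2 = 2 ∧ p.1 < p.2) with hE
    have hd1 : Disjoint ({∅} : Finset (Finset L)) (A.image (fun a => {a})) := by
      simp only [Finset.disjoint_left, Finset.mem_singleton, Finset.mem_image]
      rintro x rfl ⟨a, _, h⟩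
      exact Finset.singleton_ne_empty a h
    have hd2 : Disjoint (({∅} : Finset (Finset L)) ∪ A.image (fun a => {a}))
        (Co.image (fun b => {b})) := by
      simp only [Finset.disjoint_left, Finset.mem_union, Finset.mem_singleton,
        Finset.mem_image, hA, hCo, Finset.mem_filter, Finset.mem_univ, true_and]
      rintro x (rfl | ⟨a, ha, rfl⟩) ⟨b, hb, h⟩
      · exact Finset.singleton_ne_empty b (by rw [h])
      · rw [Finset.singleton_inj] at h
        rw [h] at hb; omega
    have hd3 : Disjoint (({∅} : Finset (Finset L)) ∪ A.image (fun a => {a})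
        ∪ Co.image (fun b => {b})) (E.image (fun p => {p.1, p.2})) := by
      simp only [Finset.disjoint_left, Finset.mem_union, Finset.mem_singleton,
        Finset.mem_image, hA, hCo, hE, Finset.mem_filter, Finset.mem_univ, true_and]
      rintro x ((rfl | ⟨a, ha, rfl⟩) | ⟨b, hb, rfl⟩) ⟨p, ⟨h1, h2, hlt⟩, h⟩
      · have : p.1 ∈ ({p.1, p.2} : Finset L) := Finset.mem_insert_self _ _
        rw [h] at this; exact absurd this (Finset.notMem_empty _)
      · have hc : ({p.1, p.2} : Finset L).card = 2 := Finset.card_pair hlt.ne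
        rw [h] at hc; simp at hc
      · have hc : ({p.1, p.2} : Finset L).card = 2 := Finset.card_pair hlt.ne
        rw [h] at hc; simp at hc
    rw [hM, Finset.sum_union hd3, Finset.sum_union hd2, Finset.sum_union hd1]
    have s0 : ∑ m ∈ ({∅} : Finset (Finset L)), (Polynomial.X : Polynomial ℝ) ^ m.card = 1 := by
      simp
    have s1 : ∑ m ∈ A.image (fun a => ({a} : Finset L)), (Polynomial.X : Polynomial ℝ) ^ m.card
        = (m₁ : Polynomial ℝ) * Polynomial.X := by
      rw [Finset.sum_image (fun x _ y _ h => Finset.singleton_inj.1 h)]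
      simp [hm₁, Finset.sum_const, nsmul_eq_mul]
    have s2 : ∑ m ∈ Co.image (fun b => ({b} : Finset L)), (Polynomial.X : Polynomial ℝ) ^ m.card
        = (m₂ : Polynomial ℝ) * Polynomial.X := by
      rw [Finset.sum_image (fun x _ y _ h => Finset.singleton_inj.1 h)]
      simp [hm₂, Finset.sum_const, nsmul_eq_mul]
    have s3 : ∑ m ∈ E.image (fun p => ({p.1, p.2} : Finset L)),
        (Polynomial.X : Polynomial ℝ) ^ m.card = (e : Polynomial ℝ) * Polynomial.X ^ 2 := by
      have hinj2 : ∀ p ∈ E, ∀ q ∈ E, ({p.1, p.2} : Finset L) = {q.1, q.2} → p = q := by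
        intro p hp q hq h
        simp only [hE, Finset.mem_filter, Finset.mem_univ, true_and] at hp hq
        have h1 : p.1 ∈ ({q.1, q.2} : Finset L) := by
          rw [← h]; exact Finset.mem_insert_self _ _
        have h2 : p.2 ∈ ({q.1, q.2} : Finset L) := by
          rw [← h]; simp
        simp only [Finset.mem_insert, Finset.mem_singleton] at h1 h2
        have hp1 : p.1 = q.1 := by
          rcases h1 with h1 | h1
          · exact h1
          · rw [h1] at hp; omega
        have hp2 : p.2 = q.2 := by
          rcases h2 with h2 | h2
          · rw [h2] at hp; omega
          · exact h2
        exact Prod.ext hp1 hp2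
      rw [Finset.sum_image hinj2]
      have hcongr : ∀ p ∈ E, (Polynomial.X : Polynomial ℝ) ^ ({p.1, p.2} : Finset L).card
          = Polynomial.X ^ 2 := by
        intro p hp
        simp only [hE, Finset.mem_filter, Finset.mem_univ, true_and] at hp
        rw [Finset.card_pair hp.2.2.ne]
      rw [Finset.sum_congr rfl hcongr]
      simp [he, Finset.sum_const, nsmul_eq_mul]
    rw [s0, s1, s2, s3]
    rw [map_add, Polynomial.C_eq_natCast, Polynomial.C_eq_natCast, Polynomial.C_eq_natCast]
    ring
  rw [hBsum, hMsum, mul_comm]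


open Polynomial in
lemma quad_fac (e s r₁ r₂ : ℝ) (h1 : e * (r₁ * r₂) = 1) (h2 : e * (r₁ + r₂) = -s) :
    (1 + C s * X + C e * X ^ 2 : ℝ[X]) = C e * ((X - C r₁) * (X - C r₂)) := by
  have expand : (C e * ((X - C r₁) * (X - C r₂)) : ℝ[X])
      = C e * X^2 - C (e * (r₁ + r₂)) * X + C (e * (r₁ * r₂)) := by
    simp only [map_mul, map_add]
    ring
  rw [expand, h1, h2, map_neg, map_one]
  ring

open Polynomial in
lemma roots_card_eq (s e : ℝ) (he : 0 < e) (hd : 0 ≤ s^2 - 4*e) :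
    Multiset.card ((1 + C s * X + C e * X ^ 2 : ℝ[X]) * (1 + X)^2).roots
      = ((1 + C s * X + C e * X ^ 2 : ℝ[X]) * (1 + X)^2).natDegree := by
  obtain ⟨r₁, hr1⟩ : ∃ r : ℝ, r = (-s + Real.sqrt (s^2-4*e)) / (2*e) := ⟨_, rfl⟩
  obtain ⟨r₂, hr2⟩ : ∃ r : ℝ, r = (-s - Real.sqrt (s^2-4*e)) / (2*e) := ⟨_, rfl⟩
  have he' : (e : ℝ) ≠ 0 := ne_of_gt he
  have hsq : Real.sqrt (s^2-4*e) * Real.sqrt (s^2-4*e) = s^2-4*e := Real.mul_self_sqrt hd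
  have h1 : e * (r₁ * r₂) = 1 := by
    rw [hr1, hr2]; field_simp; nlinarith [hsq, Real.mul_self_sqrt (show (0:ℝ) ≤ s^2 - e*4 by linarith)]
  have h2 : e * (r₁ + r₂) = -s := by
    rw [hr1, hr2]; field_simp; ring
  rw [quad_fac e s r₁ r₂ h1 h2]
  have hXp1 : (X + 1 : ℝ[X]) = X - C (-1) := by simp
  have hq : (C e * ((X - C r₁) * (X - C r₂)) : ℝ[X]) * (1 + X)^2
      = C e * ((X - C r₁) * ((X - C r₂) * (X - C (-1))^2)) := by
    rw [← hXp1]; ring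
  rw [hq]
  have hmonic : ((X - C r₁) * ((X - C r₂) * (X - C (-1)) ^ 2) : ℝ[X]).Monic :=
    (monic_X_sub_C r₁).mul ((monic_X_sub_C r₂).mul ((monic_X_sub_C (-1)).pow 2))
  rw [roots_C_mul _ he', natDegree_C_mul he']
  have hdeg : ((X - C r₁) * ((X - C r₂) * (X - C (-1))^2) : ℝ[X]).natDegree = 4 := by
    rw [(monic_X_sub_C r₁).natDegree_mul ((monic_X_sub_C r₂).mul ((monic_X_sub_C (-1)).pow 2)),
      (monic_X_sub_C r₂).natDegree_mul ((monic_X_sub_C (-1)).pow 2),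
      natDegree_X_sub_C, natDegree_pow, natDegree_X_sub_C]
    have h11 : (X + 1 : ℝ[X]).natDegree = 1 := by simpa using natDegree_X_add_C (1:ℝ)
    simp [natDegree_X_sub_C, h11]
  have hroots : Multiset.card ((X - C r₁) * ((X - C r₂) * (X - C (-1))^2) : ℝ[X]).roots = 4 := by
    rw [roots_mul (((monic_X_sub_C r₁).mul ((monic_X_sub_C r₂).mul
        ((monic_X_sub_C (-1)).pow 2))).ne_zero),
      roots_mul (((monic_X_sub_C r₂).mul ((monic_X_sub_C (-1)).pow 2)).ne_zero),
      roots_pow, roots_X_sub_C, roots_X_sub_C, roots_X_sub_C]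
    simp
  rw [hdeg, hroots]


end Main

/-- For a geometric lattice `L` of rank `3` (finite, atomistic, graded with submodular
rank function) with `m₁` atoms, `m₂` coatoms and `e` atom–coatom incidences,
`c_L(t) = (1 + (m₁+m₂)t + e t²)(1+t)²`, and `c_L(t)` is real-rooted. -/
theorem stmt16 {L : Type*} [Lattice L] [Fintype L] [BoundedOrder L]
    (ρ : L → ℕ) (hρ0 : ρ ⊥ = 0) (hcov : ∀ a b : L, a ⋖ b → ρ b = ρ a + 1)
    (hsub : ∀ a b : L, ρ (a ⊔ b) + ρ (a ⊓ b) ≤ ρ a + ρ b)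
    (hatom : ∀ x : L, ∃ s : Finset L, (∀ a ∈ s, IsAtom a) ∧ x = s.sup id)
    (hrank : ρ ⊤ = 3)
    (m₁ m₂ e : ℕ)
    (hm₁ : m₁ = (Finset.univ.filter (fun x : L => ρ x = 1)).card)
    (hm₂ : m₂ = (Finset.univ.filter (fun x : L => ρ x = 2)).card)
    (he : e = (Finset.univ.filter
      (fun p : L × L => ρ p.1 = 1 ∧ ρ p.2 = 2 ∧ p.1 < p.2)).card) :
    chainPoly L =
      (1 + Polynomial.C ((m₁ : ℝ) + m₂) * Polynomial.X +
        Polynomial.C (e : ℝ) * Polynomial.X ^ 2) * (1 + Polynomial.X) ^ 2 ∧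
    Multiset.card (chainPoly L).roots = (chainPoly L).natDegree := by
  have hpoly := chainPoly_eq ρ hρ0 hcov hrank m₁ m₂ e hm₁ hm₂ he
  refine ⟨hpoly, ?_⟩
  -- e is positive
  have hbt : (⊥ : L) < ⊤ := lt_of_le_of_ne le_top (rk_bot_ne_top (ρ := ρ) hρ0 hrank)
  obtain ⟨c, hc, hcle⟩ := exists_covBy_le_of_lt hbt
  have hρc : ρ c = 1 := by have := hcov ⊥ c hc; omega
  have hclt : c < ⊤ := lt_top_iff_ne_top.2 (fun h => by rw [h, hrank] at hρc; omega)
  obtain ⟨d, hcd, hdt⟩ := exists_le_covBy_of_lt hclt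
  have hρd : ρ d = 2 := by have := hcov d ⊤ hdt; omega
  have hcdlt : c < d := lt_of_le_of_ne hcd (fun h => by rw [h, hρd] at hρc; omega)
  have hepos : 0 < e := by
    rw [he]
    apply Finset.card_pos.2
    exact ⟨(c, d), by simp [Finset.mem_filter, hρc, hρd, hcdlt]⟩
  -- e ≤ m₁ * m₂
  have hele : e ≤ m₁ * m₂ := by
    rw [he, hm₁, hm₂, ← Finset.card_product]
    apply Finset.card_le_card
    intro p hp
    simp only [Finset.mem_filter, Finset.mem_univ, true_and] at hp
    simp only [Finset.mem_product, Finset.mem_filter, Finset.mem_univ, true_and]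
    exact ⟨hp.1, hp.2.1⟩
  have hd : (0:ℝ) ≤ ((m₁:ℝ) + m₂)^2 - 4*(e:ℝ) := by
    have h1 : (e:ℝ) ≤ (m₁:ℝ) * m₂ := by exact_mod_cast hele
    nlinarith [sq_nonneg ((m₁:ℝ) - (m₂:ℝ))]
  have hepos' : (0:ℝ) < (e:ℝ) := by exact_mod_cast hepos
  rw [hpoly]
  exact roots_card_eq ((m₁:ℝ) + m₂) (e:ℝ) hepos' hd
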